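/- For the linearly oriented quiver A_n, if Y is an extension of E^{ij} by E^{kl} and it is not the case that i+1 ≤ k ≤ j+1 ≤ l, then the extension is trivial, i.e., Y ≅ E^{ij} ⊕ E^{kl}. -/

import Mathlib

open Classical

/-- A representation of a quiver (given by vertex type `ι`, arrow type `E`,
and source/target maps `s t : E → ι`) over a field `K`: a finite-dimensional
`K`-vector space at each vertex and a linear map along each arrow. -/
structure QRep (K : Type) [Field K] {ι : Type} {E : Type} (s t : E → ι) : Type 1 where
  V : ι → Type
  [addV : ∀ i, AddCommGroup (V i)]
  [modV : ∀ i, Module K (V i)]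
  [fdV : ∀ i, FiniteDimensional K (V i)]
  f : ∀ e : E, V (s e) →ₗ[K] V (t e)

attribute [instance] QRep.addV QRep.modV QRep.fdV

namespace QRep

variable {K : Type} [Field K] {ι E : Type} {s t : E → ι}

/-- A morphism of representations: linear maps at each vertex commuting with the arrow maps. -/
structure Hom (X Y : QRep K s t) : Type where
  φ : ∀ i, X.V i →ₗ[K] Y.V i
  comm : ∀ e, (Y.f e).comp (φ (s e)) = (φ (t e)).comp (X.f e)

def Hom.Surjective {X Y : QRep K s t} (f : Hom X Y) : Prop := ∀ i, Function.Surjective (f.φ i)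

def Hom.Injective {X Y : QRep K s t} (f : Hom X Y) : Prop := ∀ i, Function.Injective (f.φ i)

/-- Two representations are isomorphic if there is a morphism bijective at every vertex. -/
def Iso (X Y : QRep K s t) : Prop := ∃ f : Hom X Y, ∀ i, Function.Bijective (f.φ i)

/-- Direct sum of two representations, taken vertexwise. -/
def dsum (X Y : QRep K s t) : QRep K s t where
  V i := X.V i × Y.V i
  f e := (X.f e).prodMap (Y.f e)

instance : Module.Finite K PUnit :=
  Module.Finite.of_surjective (0 : K →ₗ[K] PUnit) (fun x => ⟨0, Subsingleton.elim _ _⟩)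

/-- The zero representation. -/
def zero : QRep K s t where
  V _ := PUnit
  f _ := 0

/-- A representation is zero if all its vector spaces are zero. -/
def IsZero (X : QRep K s t) : Prop := ∀ i, ∀ x : X.V i, x = 0

/-- Indecomposable: nonzero, and not isomorphic to a direct sum of two nonzero representations. -/
def Indec (X : QRep K s t) : Prop :=
  ¬ X.IsZero ∧ ∀ A B : QRep K s t, Iso X (A.dsum B) → A.IsZero ∨ B.IsZero

/-- Direct sum of a finite list of representations. -/
noncomputable def dsumList : List (QRep K s t) → QRep K s t
  | [] => zero
  | X :: L => X.dsum (dsumList L)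

/-- An extension `Y` of `Z` by `X`: an injective morphism `X → Y` and a surjective
morphism `Y → Z` whose vertexwise kernel is the image of `X`. -/
structure Extension (X Y Z : QRep K s t) : Type where
  incl : Hom X Y
  proj : Hom Y Z
  inj : ∀ i, Function.Injective (incl.φ i)
  surj : ∀ i, Function.Surjective (proj.φ i)
  exact : ∀ i, LinearMap.ker (proj.φ i) = LinearMap.range (incl.φ i)

/-- An extension is trivial (split) if there is a morphism `Y → X` restricting to the identity on `X`. -/
def Extension.Trivial {X Y Z : QRep K s t} (E : Extension X Y Z) : Prop :=
  ∃ r : Hom Y X, ∀ i x, r.φ i (E.incl.φ i x) = x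

/-- A subrepresentation of `Y`: a subspace at each vertex, stable under the arrow maps. -/
structure Sub (Y : QRep K s t) : Type where
  p : ∀ i, Submodule K (Y.V i)
  stable : ∀ e, ∀ x ∈ p (s e), Y.f e x ∈ p (t e)

def Sub.toRep {Y : QRep K s t} (S : Sub Y) : QRep K s t where
  V i := S.p i
  f e := (Y.f e).restrict (S.stable e)

/-- The quotient representation `Y/X`. -/
def Sub.quot {Y : QRep K s t} (S : Sub Y) : QRep K s t where
  V i := Y.V i ⧸ S.p i
  f e := Submodule.mapQ (S.p (s e)) (S.p (t e)) (Y.f e) (fun x hx => S.stable e x hx)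

/-- The inclusion morphism of a subrepresentation. -/
def Sub.incl {Y : QRep K s t} (S : Sub Y) : Hom S.toRep Y where
  φ i := (S.p i).subtype
  comm e := by ext x; rfl

/-- The quotient morphism onto the quotient representation. -/
def Sub.mkQ {Y : QRep K s t} (S : Sub Y) : Hom Y S.quot where
  φ i := (S.p i).mkQ
  comm e := by ext x; first | rfl | (simp only [LinearMap.comp_apply]; exact Submodule.mapQ_apply _ _ _ x)

/-- The space of morphisms between two representations, as a subspace of the product of Hom spaces. -/
def HomSpace (X Y : QRep K s t) : Submodule K (∀ i, X.V i →ₗ[K] Y.V i) where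
  carrier := {φ | ∀ e, (Y.f e).comp (φ (s e)) = (φ (t e)).comp (X.f e)}
  add_mem' := by
    intro a b ha hb e
    simp only [Set.mem_setOf_eq] at ha hb
    simp [LinearMap.comp_add, LinearMap.add_comp, ha e, hb e]
  zero_mem' := by intro e; simp
  smul_mem' := by
    intro c a ha e
    simp only [Set.mem_setOf_eq] at ha
    simp [LinearMap.comp_smul, LinearMap.smul_comp, ha e]

end QRep
/-- The source of the `e`-th arrow of the linearly oriented quiver `Aₙ`
(vertices `0,…,n-1`, arrows `e → e+1` for `0 ≤ e < n-1`; 0-based indexing). -/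
def ASrc (n : ℕ) (e : Fin (n - 1)) : Fin n := ⟨e.val, by have := e.isLt; omega⟩

/-- The target of the `e`-th arrow of `Aₙ`. -/
def ATgt (n : ℕ) (e : Fin (n - 1)) : Fin n := ⟨e.val + 1, by have := e.isLt; omega⟩

/-- Representations of the linearly oriented quiver `Aₙ`. -/
abbrev ARep (K : Type) [Field K] (n : ℕ) := QRep K (ASrc n) (ATgt n)

/-- The canonical map from `M` to a submodule `T`: the identity if `T = ⊤`, zero otherwise. -/
noncomputable def toSub {K M : Type} [Field K] [AddCommGroup M] [Module K M]
    (T : Submodule K M) : M →ₗ[K] T :=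
  if h : T = ⊤ then LinearMap.codRestrict T LinearMap.id (fun x => by simp [h]) else 0

/-- The vertex spaces of the interval representation `E^{ij}`: `K` for `i ≤ p ≤ j`, zero otherwise. -/
def ESub (K : Type) [Field K] (n i j : ℕ) (p : Fin n) : Submodule K K :=
  if i ≤ p.val ∧ p.val ≤ j then ⊤ else ⊥

/-- The interval representation `E^{ij}` of `Aₙ` (0-based): one-dimensional spaces at
vertices `i,…,j`, identity maps between consecutive ones, zero elsewhere. -/
noncomputable def Eij (K : Type) [Field K] (n i j : ℕ) : ARep K n where
  V p := ESub K n i j p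
  f e := (toSub (ESub K n i j (ATgt n e))).comp (ESub K n i j (ASrc n e)).subtype

/-- Direct sum of interval representations indexed by a list of pairs. -/
noncomputable def intervalSum (K : Type) [Field K] (n : ℕ) (L : List (ℕ × ℕ)) : ARep K n :=
  QRep.dsumList (L.map fun pr => Eij K n pr.1 pr.2)


namespace StmtSixAux

variable {K : Type} [Field K] {n : ℕ}

/-- The underlying scalar of an element of an interval representation. -/
def ev {i j : ℕ} {p : Fin n} (x : (Eij K n i j).V p) : K := Subtype.val x

lemma ev_inj {i j : ℕ} {p : Fin n} {x y : (Eij K n i j).V p} (h : ev x = ev y) :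
    x = y := Subtype.ext h

@[simp] lemma ev_zero {i j : ℕ} {p : Fin n} : ev (0 : (Eij K n i j).V p) = 0 := rfl

lemma ev_smul {i j : ℕ} {p : Fin n} (c : K) (x : (Eij K n i j).V p) :
    ev (c • x) = c * ev x := rfl

lemma ev_sub {i j : ℕ} {p : Fin n} (x y : (Eij K n i j).V p) :
    ev (x - y) = ev x - ev y := rfl

lemma esub_top {i j : ℕ} {p : Fin n} (h : i ≤ p.val ∧ p.val ≤ j) :
    ESub K n i j p = ⊤ := if_pos h

lemma esub_bot {i j : ℕ} {p : Fin n} (h : ¬(i ≤ p.val ∧ p.val ≤ j)) :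
    ESub K n i j p = ⊥ := if_neg h

lemma mem_esub {i j : ℕ} {p : Fin n} (h : i ≤ p.val ∧ p.val ≤ j) (c : K) :
    c ∈ ESub K n i j p := by rw [esub_top h]; trivial

lemma eij_zero {i j : ℕ} {p : Fin n} (h : ¬(i ≤ p.val ∧ p.val ≤ j))
    (x : (Eij K n i j).V p) : x = 0 := by
  have hx : ev x ∈ ESub K n i j p := x.2
  rw [esub_bot h, Submodule.mem_bot] at hx
  exact Subtype.ext hx

lemma eij_f_val {i j : ℕ} (e : Fin (n-1)) (x : (Eij K n i j).V (ASrc n e)) :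
    ev ((Eij K n i j).f e x)
      = if i ≤ e.val + 1 ∧ e.val + 1 ≤ j then ev x else 0 := by
  show ev (toSub (ESub K n i j (ATgt n e)) (ev x)) = _
  unfold toSub
  by_cases hc : i ≤ e.val + 1 ∧ e.val + 1 ≤ j
  · rw [dif_pos (esub_top (p := ATgt n e) hc), if_pos hc]; rfl
  · rw [if_neg hc, dif_neg]
    · rfl
    · rw [esub_bot (p := ATgt n e) hc]; exact bot_ne_top

lemma eij_f_val' {i j : ℕ} (p : ℕ) (h : p < n - 1) (x : (Eij K n i j).V (ASrc n ⟨p, h⟩)) :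
    ev ((Eij K n i j).f ⟨p, h⟩ x) = if i ≤ p + 1 ∧ p + 1 ≤ j then ev x else 0 :=
  eij_f_val ⟨p, h⟩ x

/-- The arrow map of `Aₙ` from vertex `p` to `p+1`, with convenient indexing. -/
noncomputable def stepMap (Y : ARep K n) (p : ℕ) (hp : p + 1 < n) :
    Y.V ⟨p, Nat.lt_of_succ_lt hp⟩ →ₗ[K] Y.V ⟨p+1, hp⟩ :=
  Y.f ⟨p, Nat.lt_sub_of_add_lt hp⟩

/-- Propagation of a "seed" through a representation of `Aₙ`:
at each step apply the arrow map and add the seed at the new vertex. -/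
noncomputable def svec (Y : ARep K n) (seed : ∀ p : Fin n, Y.V p) :
    (p : ℕ) → (hp : p < n) → Y.V ⟨p, hp⟩
  | 0, hp => seed ⟨0, hp⟩
  | p+1, hp => stepMap Y p hp (svec Y seed p (Nat.lt_of_succ_lt hp)) + seed ⟨p+1, hp⟩

lemma svec_zero (Y : ARep K n) (seed : ∀ p : Fin n, Y.V p) (hp : 0 < n) :
    svec Y seed 0 hp = seed ⟨0, hp⟩ := rfl

lemma svec_succ (Y : ARep K n) (seed : ∀ p : Fin n, Y.V p) (p : ℕ) (hp : p + 1 < n) :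
    svec Y seed (p+1) hp
      = stepMap Y p hp (svec Y seed p (Nat.lt_of_succ_lt hp)) + seed ⟨p+1, hp⟩ := rfl

lemma svec_lt (Y : ARep K n) (seed : ∀ p : Fin n, Y.V p) (m : Fin n)
    (hseed : ∀ q, q ≠ m → seed q = 0) :
    ∀ (p : ℕ) (hp : p < n), p < m.val → svec Y seed p hp = 0 := by
  intro p
  induction p with
  | zero =>
      intro hp h
      rw [svec_zero, hseed ⟨0, hp⟩ (fun hq => by subst hq; exact absurd h (by simp))]
  | succ p ih =>
      intro hp h
      rw [svec_succ, ih _ (by omega),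
        hseed ⟨p+1, hp⟩ (fun hq => by subst hq; exact absurd h (by simp)),
        map_zero, add_zero]

lemma svec_at_ev {a b : ℕ} (seed : ∀ p : Fin n, (Eij K n a b).V p) (m : Fin n)
    (hseed : ∀ q, q ≠ m → seed q = 0) :
    ∀ (p : ℕ) (hp : p < n), p = m.val →
      ev (svec (Eij K n a b) seed p hp) = ev (seed m) := by
  intro p
  cases p with
  | zero =>
      intro hp h
      have hm : (⟨0, hp⟩ : Fin n) = m := Fin.ext h
      rw [svec_zero, hm]
  | succ p =>
      intro hp h
      have hm : (⟨p+1, hp⟩ : Fin n) = m := Fin.ext h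
      rw [svec_succ, svec_lt (Eij K n a b) seed m hseed p (Nat.lt_of_succ_lt hp) (by omega),
        map_zero, zero_add, hm]

lemma svec_hom {Y W : ARep K n} (f : QRep.Hom Y W) (seed : ∀ p : Fin n, Y.V p) :
    ∀ (p : ℕ) (hp : p < n),
      f.φ ⟨p, hp⟩ (svec Y seed p hp) = svec W (fun q => f.φ q (seed q)) p hp := by
  intro p
  induction p with
  | zero => intro hp; rfl
  | succ p ih =>
      intro hp
      rw [svec_succ, svec_succ, map_add, ← ih (Nat.lt_of_succ_lt hp)]
      congr 1
      exact (LinearMap.congr_fun (f.comm ⟨p, Nat.lt_sub_of_add_lt hp⟩)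
        (svec Y seed p (Nat.lt_of_succ_lt hp))).symm

lemma svec_sub (Y : ARep K n) (a b : ∀ p : Fin n, Y.V p) :
    ∀ (p : ℕ) (hp : p < n),
      svec Y (fun q => a q - b q) p hp = svec Y a p hp - svec Y b p hp := by
  intro p
  induction p with
  | zero => intro hp; rfl
  | succ p ih =>
      intro hp
      rw [svec_succ, svec_succ, svec_succ, ih (Nat.lt_of_succ_lt hp), map_sub]
      abel

lemma svec_eij_val {a b : ℕ} (seed : ∀ p : Fin n, (Eij K n a b).V p) (m : Fin n)
    (hseed : ∀ q, q ≠ m → seed q = 0) (ha : a ≤ m.val) :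
    ∀ (p : ℕ) (hp : p < n), m.val ≤ p → p ≤ b →
      ev (svec (Eij K n a b) seed p hp) = ev (seed m) := by
  intro p
  induction p with
  | zero =>
      intro hp h1 h2
      exact svec_at_ev seed m hseed 0 hp (by omega)
  | succ p ih =>
      intro hp h1 h2
      rcases Nat.eq_or_lt_of_le h1 with he | hlt
      · exact svec_at_ev seed m hseed (p+1) hp he.symm
      · have hpm : m.val ≤ p := by omega
        rw [svec_succ,
          hseed ⟨p+1, hp⟩ (fun hq => by subst hq; exact absurd hlt (by simp)),
          add_zero]
        have hv := eij_f_val' (i := a) (j := b) p (Nat.lt_sub_of_add_lt hp)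
          (svec (Eij K n a b) seed p (Nat.lt_of_succ_lt hp))
        rw [if_pos ⟨by omega, h2⟩] at hv
        rw [show ev (stepMap (Eij K n a b) p hp (svec (Eij K n a b) seed p
              (Nat.lt_of_succ_lt hp))) = ev ((Eij K n a b).f ⟨p, Nat.lt_sub_of_add_lt hp⟩
              (svec (Eij K n a b) seed p (Nat.lt_of_succ_lt hp))) from rfl, hv]
        exact ih (Nat.lt_of_succ_lt hp) hpm (by omega)

/-- Inverse along an injective linear map whose range contains the range of `g`. -/
noncomputable def invOf {M N P : Type} [AddCommGroup M] [Module K M]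
    [AddCommGroup N] [Module K N] [AddCommGroup P] [Module K P]
    (f : M →ₗ[K] N) (hf : Function.Injective f) (g : P →ₗ[K] N)
    (hg : ∀ x, g x ∈ LinearMap.range f) : P →ₗ[K] M :=
  ((LinearEquiv.ofInjective f hf).symm.toLinearMap).comp (g.codRestrict _ hg)

lemma invOf_spec {M N P : Type} [AddCommGroup M] [Module K M]
    [AddCommGroup N] [Module K N] [AddCommGroup P] [Module K P]
    (f : M →ₗ[K] N) (hf : Function.Injective f) (g : P →ₗ[K] N)
    (hg : ∀ x, g x ∈ LinearMap.range f) (x : P) :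
    f (invOf f hf g hg x) = g x := by
  have h1 : (LinearEquiv.ofInjective f hf)
      ((LinearEquiv.ofInjective f hf).symm (g.codRestrict _ hg x))
        = g.codRestrict _ hg x := LinearEquiv.apply_symm_apply _ _
  have h2 := congrArg Subtype.val h1
  rw [LinearEquiv.ofInjective_apply] at h2
  exact h2

end StmtSixAux

open StmtSixAux in
/-- if `Y` is an extension of `E^{ij}` by `E^{kl}` and it is not the case that
`i+1 ≤ k ≤ j+1 ≤ l`, then the extension is trivial, i.e. `Y ≅ E^{ij} ⊕ E^{kl}`. -/
theorem stmt6 (K : Type) [Field K] (n i j k l : ℕ)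
    (hij : i ≤ j) (hj : j < n) (hkl : k ≤ l) (hl : l < n)
    (Y : ARep K n) (ext : QRep.Extension (Eij K n k l) Y (Eij K n i j))
    (hcond : ¬ (i + 1 ≤ k ∧ k ≤ j + 1 ∧ j + 1 ≤ l)) :
    ext.Trivial ∧ QRep.Iso Y (QRep.dsum (Eij K n i j) (Eij K n k l)) := by
  classical
  have hin : i < n := lt_of_le_of_lt hij hj
  set vi : Fin n := ⟨i, hin⟩ with hvi
  have hvival : vi.val = i := by rw [hvi]
  -- proj ∘ incl = 0
  have hpi : ∀ (p : Fin n) (x : (Eij K n k l).V p),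
      ext.proj.φ p (ext.incl.φ p x) = 0 := by
    intro p x
    have hmem : ext.incl.φ p x ∈ LinearMap.ker (ext.proj.φ p) := by
      rw [ext.exact p]; exact ⟨x, rfl⟩
    exact hmem
  have hone : (1 : K) ∈ ESub K n i j vi := mem_esub ⟨le_of_eq hvival.symm, by omega⟩ 1
  obtain ⟨y0, hy0⟩ := ext.surj vi (⟨1, hone⟩ : ESub K n i j vi)
  let seedY : ∀ p : Fin n, Y.V p := fun q => if hq : q = vi then hq.symm ▸ y0 else 0
  have hseedY0 : ∀ q, q ≠ vi → seedY q = 0 := fun q hq => dif_neg hq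
  have hseedYvi : seedY vi = y0 := by
    show (if hq : vi = vi then hq.symm ▸ y0 else 0) = y0
    rw [dif_pos rfl]
  have key : ∃ seed : ∀ p : Fin n, Y.V p,
      (∀ q, q ≠ vi → seed q = 0) ∧
      (ev (ext.proj.φ vi (seed vi)) = 1) ∧
      (∀ h : j + 1 < n, svec Y seed (j+1) h = 0) := by
    by_cases hend : j + 1 < n
    · have hprojw : ext.proj.φ ⟨j+1, hend⟩ (svec Y seedY (j+1) hend) = 0 :=
        eij_zero (show ¬(i ≤ j+1 ∧ j+1 ≤ j) by omega) _
      have hwr : svec Y seedY (j+1) hend ∈ LinearMap.range (ext.incl.φ ⟨j+1, hend⟩) := by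
        rw [← ext.exact ⟨j+1, hend⟩]
        exact LinearMap.mem_ker.mpr hprojw
      obtain ⟨c, hc⟩ := hwr
      by_cases hX : k ≤ j+1 ∧ j+1 ≤ l
      · have hki : k ≤ i := by
          by_contra hcon
          exact hcond ⟨by omega, by omega, by omega⟩
        have hcmem : ev c ∈ ESub K n k l vi := mem_esub ⟨by omega, by omega⟩ _
        set ci : (Eij K n k l).V vi := (⟨ev c, hcmem⟩ : ESub K n k l vi) with hci
        let seedX : ∀ p : Fin n, (Eij K n k l).V p :=
          fun q => if hq : q = vi then hq.symm ▸ ci else 0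
        have hseedX0 : ∀ q, q ≠ vi → seedX q = 0 := fun q hq => dif_neg hq
        have hseedXvi : seedX vi = ci := by
          show (if hq : vi = vi then hq.symm ▸ ci else 0) = ci
          rw [dif_pos rfl]
        have hXval : svec (Eij K n k l) seedX (j+1) hend = c := by
          apply ev_inj
          rw [svec_eij_val seedX vi hseedX0 (by omega) (j+1) hend (by omega) (by omega),
            hseedXvi, hci]
          rfl
        refine ⟨fun q => seedY q - ext.incl.φ q (seedX q), ?_, ?_, ?_⟩
        · intro q hq
          show seedY q - ext.incl.φ q (seedX q) = 0
          rw [hseedY0 q hq, hseedX0 q hq, map_zero, sub_zero]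
        · show ev (ext.proj.φ vi (seedY vi - ext.incl.φ vi (seedX vi))) = 1
          rw [map_sub, hseedYvi, hseedXvi, hy0, hpi]
          exact (congrArg ev (sub_zero _)).trans rfl
        · intro h
          show svec Y (fun q => seedY q - ext.incl.φ q (seedX q)) (j+1) hend = 0
          rw [svec_sub Y seedY (fun q => ext.incl.φ q (seedX q)) (j+1) hend,
            ← svec_hom ext.incl seedX (j+1) hend, hXval, hc, sub_self]
      · have hc0 : c = 0 := eij_zero hX c
        refine ⟨seedY, hseedY0, ?_, ?_⟩
        · rw [hseedYvi, hy0]; rfl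
        · intro h
          show svec Y seedY (j+1) hend = 0
          rw [← hc, hc0, map_zero]
    · exact ⟨seedY, hseedY0, by rw [hseedYvi, hy0]; rfl, fun h => absurd h hend⟩
  obtain ⟨seed', h1, h2, h3⟩ := key
  -- the value 1 propagates along the section
  have h4 : ∀ (p : ℕ) (hp : p < n), i ≤ p → p ≤ j →
      ev (ext.proj.φ ⟨p, hp⟩ (svec Y seed' p hp)) = 1 := by
    intro p hp hp1 hp2
    rw [svec_hom ext.proj seed' p hp,
      svec_eij_val (a := i) (b := j) (fun q => ext.proj.φ q (seed' q)) vi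
        (fun q hq => by show ext.proj.φ q (seed' q) = 0; rw [h1 q hq, map_zero])
        (le_of_eq hvival.symm) p hp
        (by omega) hp2]
    exact h2
  -- the step out of vertex j vanishes
  have hjstep : ∀ h : j + 1 < n,
      stepMap Y j h (svec Y seed' j (Nat.lt_of_succ_lt h)) = 0 := by
    intro h
    have hh := h3 h
    rw [svec_succ, h1 ⟨j+1, h⟩ (fun hq => by
        rw [Fin.ext_iff, hvival] at hq
        simp only [Fin.val_mk] at hq
        omega),
      add_zero] at hh
    exact hh
  -- the section morphism
  let sφ : ∀ p : Fin n, (Eij K n i j).V p →ₗ[K] Y.V p :=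
    fun p => (LinearMap.toSpanSingleton K (Y.V p) (svec Y seed' p.val p.isLt)).comp
      (ESub K n i j p).subtype
  have hs_apply : ∀ (p : Fin n) (z : (Eij K n i j).V p),
      sφ p z = ev z • svec Y seed' p.val p.isLt := fun p z => rfl
  have scomm : ∀ e, (Y.f e).comp (sφ (ASrc n e)) = (sφ (ATgt n e)).comp ((Eij K n i j).f e) := by
    intro e
    obtain ⟨p, hpn⟩ := e
    have hp : p + 1 < n := by omega
    apply LinearMap.ext
    intro z
    show stepMap Y p hp (ev z • svec Y seed' p (Nat.lt_of_succ_lt hp))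
      = ev ((Eij K n i j).f ⟨p, hpn⟩ z) • svec Y seed' (p+1) hp
    have key_step : stepMap Y p hp (svec Y seed' p (Nat.lt_of_succ_lt hp))
        = svec Y seed' (p+1) hp - seed' ⟨p+1, hp⟩ := by
      rw [svec_succ]; abel
    by_cases hz : ev z = 0
    · rw [map_smul, hz, zero_smul, eij_f_val']
      split_ifs <;> simp [hz]
    · have hip : i ≤ p ∧ p ≤ j := by
        by_contra hcon
        refine hz ?_
        have hzz : ev z ∈ ESub K n i j (ASrc n ⟨p, hpn⟩) := z.2
        rwa [esub_bot hcon, Submodule.mem_bot] at hzz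
      by_cases hpj : p + 1 ≤ j
      · rw [map_smul, key_step,
          h1 ⟨p+1, hp⟩ (fun hq => by
            rw [Fin.ext_iff, hvival] at hq
            simp only [Fin.val_mk] at hq
            omega),
          sub_zero, eij_f_val', if_pos ⟨by omega, hpj⟩]
      · have hpj' : p = j := by omega
        subst hpj'
        rw [map_smul, hjstep hp, smul_zero, eij_f_val', if_neg (by omega), zero_smul]
  let s : QRep.Hom (Eij K n i j) Y := ⟨sφ, scomm⟩
  -- proj ∘ s = id
  have hproj_s : ∀ (p : Fin n) (z : (Eij K n i j).V p), ext.proj.φ p (sφ p z) = z := by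
    intro p z
    by_cases hpz : i ≤ p.val ∧ p.val ≤ j
    · apply ev_inj
      calc ev (ext.proj.φ p (sφ p z))
          = ev z * ev (ext.proj.φ ⟨p.val, p.isLt⟩ (svec Y seed' p.val p.isLt)) := by
            rw [hs_apply, map_smul]; rfl
        _ = ev z * 1 := by rw [h4 p.val p.isLt hpz.1 hpz.2]
        _ = ev z := mul_one _
    · have hz : z = 0 := eij_zero hpz z
      rw [hz, map_zero, map_zero]
  -- the retraction
  have hqrange : ∀ (p : Fin n) (y : Y.V p),
      y - sφ p (ext.proj.φ p y) ∈ LinearMap.range (ext.incl.φ p) := by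
    intro p y
    rw [← ext.exact p]
    refine LinearMap.mem_ker.mpr ?_
    rw [map_sub, hproj_s, sub_self]
  let rφ : ∀ p : Fin n, Y.V p →ₗ[K] (Eij K n k l).V p :=
    fun p => invOf (ext.incl.φ p) (ext.inj p)
      (LinearMap.id - (sφ p).comp (ext.proj.φ p)) (fun y => hqrange p y)
  have hr : ∀ (p : Fin n) (y : Y.V p),
      ext.incl.φ p (rφ p y) = y - sφ p (ext.proj.φ p y) :=
    fun p y => invOf_spec (ext.incl.φ p) (ext.inj p)
      (LinearMap.id - (sφ p).comp (ext.proj.φ p)) (fun y => hqrange p y) y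
  have rcomm : ∀ e, ((Eij K n k l).f e).comp (rφ (ASrc n e))
      = (rφ (ATgt n e)).comp (Y.f e) := by
    intro e
    apply LinearMap.ext
    intro y
    apply ext.inj (ATgt n e)
    show ext.incl.φ (ATgt n e) ((Eij K n k l).f e (rφ (ASrc n e) y))
      = ext.incl.φ (ATgt n e) (rφ (ATgt n e) (Y.f e y))
    have hcl := LinearMap.congr_fun (ext.incl.comm e) (rφ (ASrc n e) y)
    simp only [LinearMap.comp_apply] at hcl
    rw [← hcl, hr, hr, map_sub]
    congr 1
    have h5 := LinearMap.congr_fun (scomm e) (ext.proj.φ (ASrc n e) y)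
    simp only [LinearMap.comp_apply] at h5
    rw [h5]
    congr 1
    exact LinearMap.congr_fun (ext.proj.comm e) y
  have hr_incl : ∀ (p : Fin n) (x : (Eij K n k l).V p), rφ p (ext.incl.φ p x) = x := by
    intro p x
    apply ext.inj p
    rw [hr, hpi, map_zero, sub_zero]
  constructor
  · exact ⟨⟨rφ, rcomm⟩, hr_incl⟩
  · refine ⟨⟨fun p => LinearMap.prod (ext.proj.φ p) (rφ p), ?_⟩, ?_⟩
    · intro e
      apply LinearMap.ext
      intro y
      show ((Eij K n i j).f e (ext.proj.φ (ASrc n e) y),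
            (Eij K n k l).f e (rφ (ASrc n e) y))
        = (ext.proj.φ (ATgt n e) (Y.f e y), rφ (ATgt n e) (Y.f e y))
      refine Prod.ext ?_ ?_
      · exact LinearMap.congr_fun (ext.proj.comm e) y
      · exact LinearMap.congr_fun (rcomm e) y
    · intro p
      constructor
      · intro y1 y2 h
        have ha : ext.proj.φ p y1 = ext.proj.φ p y2 := congrArg Prod.fst h
        have hb : rφ p y1 = rφ p y2 := congrArg Prod.snd h
        have hker : ext.proj.φ p (y1 - y2) = 0 := by rw [map_sub, ha, sub_self]
        have hmem : y1 - y2 ∈ LinearMap.range (ext.incl.φ p) := by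
          rw [← ext.exact p]; exact LinearMap.mem_ker.mpr hker
        obtain ⟨x, hx⟩ := hmem
        have hx0 : x = 0 := by
          have hri := hr_incl p x
          rw [hx, map_sub, hb, sub_self] at hri
          exact hri.symm
        have hy12 : y1 - y2 = 0 := by rw [← hx, hx0, map_zero]
        exact sub_eq_zero.mp hy12
      · rintro ⟨z, x⟩
        refine ⟨sφ p z + ext.incl.φ p (x - rφ p (sφ p z)), ?_⟩
        show (ext.proj.φ p (sφ p z + ext.incl.φ p (x - rφ p (sφ p z))),
              rφ p (sφ p z + ext.incl.φ p (x - rφ p (sφ p z)))) = (z, x)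
        refine Prod.ext ?_ ?_
        · show ext.proj.φ p (sφ p z + ext.incl.φ p (x - rφ p (sφ p z))) = z
          rw [map_add, hproj_s, hpi, add_zero]
        · show rφ p (sφ p z + ext.incl.φ p (x - rφ p (sφ p z))) = x
          rw [map_add, hr_incl]
          abel
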